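/- Let T be a semistandard Young tableau of shape ν = λ + κ where λ and κ are partitions (entrywise sum, identifying partitions with infinite sequences padded by zeros). Then there exist semistandard Young tableaux T₁ of shape λ and T₂ of shape κ such that content(T) = content(T₁) + content(T₂). (Equivalently: every content vector of a semistandard tableau of shape λ+κ decomposes as a sum of a content vector of shape λ and one of shape κ.) -/

import Mathlib

/-- The content of a semistandard Young tableau: `content T v` is the number of cells whose
entry equals `v`. -/
def content {μ : YoungDiagram} (T : SemistandardYoungTableau μ) (v : ℕ) : ℕ :=
  (μ.cells.filter fun c => T c.1 c.2 = v).card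

namespace Stmt11Aux

open YoungDiagram

/-- Column `t` of `lam` is sent to this column of `nu = lam + kap`. -/
def dmap (lam kap : YoungDiagram) (t : ℕ) : ℕ :=
  t + kap.rowLen (lam.colLen t)

/-- Column `j` of `kap` is sent to this column of `nu = lam + kap`. -/
def cmap (lam kap : YoungDiagram) (j : ℕ) : ℕ :=
  j + lam.rowLen (kap.colLen j - 1)

lemma dmap_strictMono (lam kap : YoungDiagram) : StrictMono (dmap lam kap) := by
  intro a b hab
  have h1 : lam.colLen b ≤ lam.colLen a := lam.colLen_anti a b hab.le
  have h2 : kap.rowLen (lam.colLen a) ≤ kap.rowLen (lam.colLen b) :=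
    kap.rowLen_anti _ _ h1
  unfold dmap
  omega

lemma cmap_strictMono (lam kap : YoungDiagram) : StrictMono (cmap lam kap) := by
  intro a b hab
  have h1 : kap.colLen b ≤ kap.colLen a := kap.colLen_anti a b hab.le
  have h2 : lam.rowLen (kap.colLen a - 1) ≤ lam.rowLen (kap.colLen b - 1) :=
    lam.rowLen_anti _ _ (by omega)
  unfold cmap
  omega

variable {lam kap nu : YoungDiagram}
  (hsum : ∀ r : ℕ, nu.rowLen r = lam.rowLen r + kap.rowLen r)

include hsum

lemma mem_dmap (i t : ℕ) : (i, dmap lam kap t) ∈ nu ↔ (i, t) ∈ lam := by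
  rw [mem_iff_lt_rowLen, hsum, mem_iff_lt_rowLen]
  constructor
  · intro h
    by_contra hc
    push_neg at hc
    have h1 : lam.colLen t ≤ i := by
      by_contra h1
      push_neg at h1
      rw [← mem_iff_lt_colLen, mem_iff_lt_rowLen] at h1
      omega
    have h2 : kap.rowLen i ≤ kap.rowLen (lam.colLen t) := kap.rowLen_anti _ _ h1
    unfold dmap at h
    omega
  · intro h
    have h1 : i < lam.colLen t := by
      rw [← mem_iff_lt_colLen, mem_iff_lt_rowLen]; exact h
    have h2 : kap.rowLen (lam.colLen t) ≤ kap.rowLen i := kap.rowLen_anti _ _ h1.le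
    unfold dmap
    omega

lemma mem_cmap (i j : ℕ) : (i, cmap lam kap j) ∈ nu ↔ (i, j) ∈ kap := by
  rw [mem_iff_lt_rowLen, hsum, mem_iff_lt_rowLen]
  constructor
  · intro h
    by_contra hc
    push_neg at hc
    have h1 : kap.colLen j ≤ i := by
      by_contra h1
      push_neg at h1
      rw [← mem_iff_lt_colLen, mem_iff_lt_rowLen] at h1
      omega
    have h2 : lam.rowLen i ≤ lam.rowLen (kap.colLen j - 1) :=
      lam.rowLen_anti _ _ (by omega)
    unfold cmap at h
    omega
  · intro h
    have h1 : i < kap.colLen j := by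
      rw [← mem_iff_lt_colLen, mem_iff_lt_rowLen]; exact h
    have h2 : lam.rowLen (kap.colLen j - 1) ≤ lam.rowLen i :=
      lam.rowLen_anti _ _ (by omega)
    unfold cmap
    omega

lemma dmap_ne_cmap {t j : ℕ} (ht : 0 < lam.colLen t) (hj : 0 < kap.colLen j) :
    dmap lam kap t ≠ cmap lam kap j := by
  intro heq
  -- the two columns of nu coincide, so the column lengths agree
  have hmem : ∀ x : ℕ, ((x, t) ∈ lam ↔ (x, j) ∈ kap) := by
    intro x
    rw [← mem_dmap hsum x t, ← mem_cmap hsum x j, heq]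
  have hcl : lam.colLen t = kap.colLen j := by
    apply le_antisymm
    · by_contra hc
      push_neg at hc
      have : (kap.colLen j, t) ∈ lam := mem_iff_lt_colLen.mpr hc
      have : (kap.colLen j, j) ∈ kap := (hmem _).mp this
      rw [mem_iff_lt_colLen] at this
      omega
    · by_contra hc
      push_neg at hc
      have : (lam.colLen t, j) ∈ kap := mem_iff_lt_colLen.mpr hc
      have : (lam.colLen t, t) ∈ lam := (hmem _).mpr this
      rw [mem_iff_lt_colLen] at this
      omega
  set m := lam.colLen t with hm
  have h1 : t < lam.rowLen (m - 1) := by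
    rw [← mem_iff_lt_rowLen, mem_iff_lt_colLen]
    omega
  have h2 : kap.rowLen m ≤ j := by
    have : ¬ (m, j) ∈ kap := by rw [mem_iff_lt_colLen]; omega
    rw [mem_iff_lt_rowLen] at this
    omega
  unfold dmap cmap at heq
  rw [← hm, ← hcl] at heq
  omega

omit hsum

lemma card_cells_eq (μ : YoungDiagram) (N : ℕ) (hN : μ.colLen 0 ≤ N) :
    μ.cells.card = ∑ i ∈ Finset.range N, μ.rowLen i := by
  have hcells : μ.cells = (Finset.range N).biUnion μ.row := by
    ext x
    simp only [Finset.mem_biUnion, Finset.mem_range, mem_row_iff, mem_cells]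
    constructor
    · intro hx
      refine ⟨x.1, ?_, hx, rfl⟩
      have h0 : (x.1, 0) ∈ μ := μ.up_left_mem le_rfl (Nat.zero_le _) (by simpa using hx)
      rw [mem_iff_lt_colLen] at h0
      omega
    · rintro ⟨i, _, hx, _⟩
      exact hx
  rw [hcells, Finset.card_biUnion]
  · exact Finset.sum_congr rfl fun i _ => (μ.rowLen_eq_card).symm
  · intro a _ b _ hab
    rw [Function.onFun, Finset.disjoint_left]
    intro x hxa hxb
    rw [mem_row_iff] at hxa hxb
    exact hab (hxa.2.symm.trans hxb.2)

end Stmt11Aux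

open Stmt11Aux YoungDiagram

/-- If `T` is a semistandard Young tableau of shape `ν = λ + κ` (componentwise sum of row
lengths), then there are semistandard Young tableaux `T₁` of shape `λ` and `T₂` of shape `κ`
with `content T = content T₁ + content T₂`. -/
theorem stmt_11 (lam kap nu : YoungDiagram)
    (hsum : ∀ r : ℕ, nu.rowLen r = lam.rowLen r + kap.rowLen r)
    (T : SemistandardYoungTableau nu) :
    ∃ (T₁ : SemistandardYoungTableau lam) (T₂ : SemistandardYoungTableau kap),
      ∀ v : ℕ, content T v = content T₁ v + content T₂ v := by
  classical
  set T₁ : SemistandardYoungTableau lam :=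
    { entry := fun i j => if (i, j) ∈ lam then T i (dmap lam kap j) else 0
      row_weak' := by
        intro i j1 j2 hj hmem
        have hm1 : (i, j1) ∈ lam := lam.up_left_mem le_rfl hj.le hmem
        simp only [if_pos hm1, if_pos hmem]
        exact T.row_weak (dmap_strictMono lam kap hj) ((mem_dmap hsum i j2).mpr hmem)
      col_strict' := by
        intro i1 i2 j hi hmem
        have hm1 : (i1, j) ∈ lam := lam.up_left_mem hi.le le_rfl hmem
        simp only [if_pos hm1, if_pos hmem]
        exact T.col_strict hi ((mem_dmap hsum i2 j).mpr hmem)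
      zeros' := fun h => if_neg h } with hT₁
  set T₂ : SemistandardYoungTableau kap :=
    { entry := fun i j => if (i, j) ∈ kap then T i (cmap lam kap j) else 0
      row_weak' := by
        intro i j1 j2 hj hmem
        have hm1 : (i, j1) ∈ kap := kap.up_left_mem le_rfl hj.le hmem
        simp only [if_pos hm1, if_pos hmem]
        exact T.row_weak (cmap_strictMono lam kap hj) ((mem_cmap hsum i j2).mpr hmem)
      col_strict' := by
        intro i1 i2 j hi hmem
        have hm1 : (i1, j) ∈ kap := kap.up_left_mem hi.le le_rfl hmem
        simp only [if_pos hm1, if_pos hmem]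
        exact T.col_strict hi ((mem_cmap hsum i2 j).mpr hmem)
      zeros' := fun h => if_neg h } with hT₂
  refine ⟨T₁, T₂, fun v => ?_⟩
  set f1 : ℕ × ℕ → ℕ × ℕ := fun p => (p.1, dmap lam kap p.2) with hf1
  set f2 : ℕ × ℕ → ℕ × ℕ := fun p => (p.1, cmap lam kap p.2) with hf2
  have hinj1 : Function.Injective f1 := by
    intro p q h
    simp only [hf1, Prod.mk.injEq] at h
    exact Prod.ext h.1 ((dmap_strictMono lam kap).injective h.2)
  have hinj2 : Function.Injective f2 := by
    intro p q h
    simp only [hf2, Prod.mk.injEq] at h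
    exact Prod.ext h.1 ((cmap_strictMono lam kap).injective h.2)
  set S1 : Finset (ℕ × ℕ) := lam.cells.image f1 with hS1
  set S2 : Finset (ℕ × ℕ) := kap.cells.image f2 with hS2
  have hsub1 : S1 ⊆ nu.cells := by
    intro x hx
    rw [hS1, Finset.mem_image] at hx
    obtain ⟨p, hp, rfl⟩ := hx
    rw [mem_cells] at hp ⊢
    exact (mem_dmap hsum p.1 p.2).mpr (by simpa using hp)
  have hsub2 : S2 ⊆ nu.cells := by
    intro x hx
    rw [hS2, Finset.mem_image] at hx
    obtain ⟨p, hp, rfl⟩ := hx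
    rw [mem_cells] at hp ⊢
    exact (mem_cmap hsum p.1 p.2).mpr (by simpa using hp)
  have hdisj : Disjoint S1 S2 := by
    rw [Finset.disjoint_left]
    intro x hx1 hx2
    rw [hS1, Finset.mem_image] at hx1
    rw [hS2, Finset.mem_image] at hx2
    obtain ⟨p, hp, rfl⟩ := hx1
    obtain ⟨q, hq, heq⟩ := hx2
    rw [mem_cells] at hp hq
    have ht : 0 < lam.colLen p.2 := by
      have := mem_iff_lt_colLen.mp (show (p.1, p.2) ∈ lam by simpa using hp)
      omega
    have hj : 0 < kap.colLen q.2 := by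
      have := mem_iff_lt_colLen.mp (show (q.1, q.2) ∈ kap by simpa using hq)
      omega
    have : cmap lam kap q.2 = dmap lam kap p.2 := congrArg Prod.snd heq
    exact dmap_ne_cmap hsum ht hj this.symm
  -- the column lengths of lam and kap are bounded by that of nu
  have hbound : ∀ (μ : YoungDiagram), (∀ r, μ.rowLen r ≤ nu.rowLen r) →
      μ.colLen 0 ≤ nu.colLen 0 := by
    intro μ hμ
    by_contra hc
    push_neg at hc
    have h1 : (nu.colLen 0, 0) ∈ μ := mem_iff_lt_colLen.mpr hc
    rw [mem_iff_lt_rowLen] at h1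
    have h2 : (nu.colLen 0, 0) ∈ nu := by
      rw [mem_iff_lt_rowLen]
      have := hμ (nu.colLen 0)
      omega
    rw [mem_iff_lt_colLen] at h2
    omega
  set N := nu.colLen 0 with hN
  have hcard : nu.cells.card = S1.card + S2.card := by
    rw [hS1, hS2, Finset.card_image_of_injective _ hinj1,
      Finset.card_image_of_injective _ hinj2,
      card_cells_eq nu N le_rfl,
      card_cells_eq lam N (hbound lam fun r => by have := hsum r; omega),
      card_cells_eq kap N (hbound kap fun r => by have := hsum r; omega),
      ← Finset.sum_add_distrib]
    exact Finset.sum_congr rfl fun i _ => hsum i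
  have hunion : S1 ∪ S2 = nu.cells := by
    apply Finset.eq_of_subset_of_card_le (Finset.union_subset hsub1 hsub2)
    rw [Finset.card_union_of_disjoint hdisj]
    omega
  -- now compute contents
  show (nu.cells.filter fun c => T c.1 c.2 = v).card = _ + _
  rw [← hunion, Finset.filter_union,
    Finset.card_union_of_disjoint (Finset.disjoint_filter_filter hdisj),
    hS1, hS2, Finset.filter_image, Finset.filter_image,
    Finset.card_image_of_injective _ hinj1, Finset.card_image_of_injective _ hinj2]
  congr 1
  · congr 1
    apply Finset.filter_congr
    intro p hp
    rw [mem_cells] at hp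
    have : T₁ p.1 p.2 = T p.1 (dmap lam kap p.2) := by
      show (if (p.1, p.2) ∈ lam then T p.1 (dmap lam kap p.2) else 0) = _
      rw [if_pos (by simpa using hp)]
    rw [this]
  · congr 1
    apply Finset.filter_congr
    intro p hp
    rw [mem_cells] at hp
    have : T₂ p.1 p.2 = T p.1 (cmap lam kap p.2) := by
      show (if (p.1, p.2) ∈ kap then T p.1 (cmap lam kap p.2) else 0) = _
      rw [if_pos (by simpa using hp)]
    rw [this]
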